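/- For q ∈ [0,1), the function cn_p(·,q) is even, 2K_{1,p}(q)-antiperiodic (i.e., cn_p(x + 2K_{1,p}(q), q) = -cn_p(x,q)), and strictly decreasing from 1 to -1 on [0, 2K_{1,p}(q)]. -/

import Mathlib

open Real MeasureTheory Set intervalIntegral Filter

noncomputable section

/-- Incomplete p-elliptic integral of the first kind, type 1. -/
def F1 (p q x : ℝ) : ℝ :=
  ∫ θ in (0:ℝ)..x, |Real.cos θ| ^ (1 - 2/p) / Real.sqrt (1 - q^2 * Real.sin θ ^ 2)

/-- Complete p-elliptic integral of the first kind, type 1. -/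
def K1 (p q : ℝ) : ℝ := F1 p q (π/2)

/-- Incomplete p-elliptic integral of the second kind, type 1. -/
def E1 (p q x : ℝ) : ℝ :=
  ∫ θ in (0:ℝ)..x, Real.sqrt (1 - q^2 * Real.sin θ ^ 2) * |Real.cos θ| ^ (1 - 2/p)

/-- Complete p-elliptic integral of the second kind, type 1. -/
def E1c (p q : ℝ) : ℝ := E1 p q (π/2)

/-- Incomplete p-elliptic integral of the first kind, type 2. -/
def F2 (p q x : ℝ) : ℝ :=
  ∫ θ in (0:ℝ)..x, (1 - q^2 * Real.sin θ ^ 2) ^ (-(1/p))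

/-- Complete p-elliptic integral of the first kind, type 2. -/
def K2 (p q : ℝ) : ℝ := F2 p q (π/2)

open Classical in
/-- Domain of the amplitude parametrization: restricted to `(-π/2, π/2)` when `q = 1` and `p ≤ 2`. -/
def amDom (p q : ℝ) : Set ℝ := if q = 1 ∧ p ≤ 2 then Ioo (-(π/2)) (π/2) else univ

/-- `g` is the inverse of `f`, with `f` regarded as a bijection from `S` onto `ℝ`. -/
def IsInverseOn (f g : ℝ → ℝ) (S : Set ℝ) : Prop :=
  (∀ y ∈ S, g (f y) = y) ∧ ∀ x : ℝ, g x ∈ S ∧ f (g x) = x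


private lemma cos_per (c : ℝ) : Function.Periodic (fun θ : ℝ => |Real.cos θ| ^ c) π := by
  intro x; simp [Real.cos_add_pi, abs_neg]

private lemma coscpow_intervalIntegrable {c : ℝ} (hc : -1 < c) (a b : ℝ) :
    IntervalIntegrable (fun θ : ℝ => |Real.cos θ| ^ c) volume a b := by
  set f : ℝ → ℝ := fun θ => |Real.cos θ| ^ c with hf
  rcases le_or_gt 0 c with h0 | h0
  · exact ((continuous_cos.abs.rpow_const fun x => Or.inr h0)).intervalIntegrable a b
  -- singular case
  have hπ := Real.pi_pos
  have base : IntervalIntegrable f volume 0 (π/2) := by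
    have hmaj0 : IntervalIntegrable (fun x : ℝ => x ^ c) volume (π/2) 0 :=
      intervalIntegrable_rpow' hc
    have hmaj1 := hmaj0.comp_sub_left (π/2)
    have hmaj : IntervalIntegrable (fun θ : ℝ => (2/π) ^ c * (π/2 - θ) ^ c) volume 0 (π/2) := by
      have := hmaj1.const_mul ((2/π) ^ c)
      simpa using this
    apply hmaj.mono_fun
    · rw [uIoc_of_le (by linarith : (0:ℝ) ≤ π/2),
        ← Measure.restrict_congr_set Ioo_ae_eq_Ioc]
      refine ContinuousOn.aestronglyMeasurable ?_ measurableSet_Ioo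
      intro x hx
      apply ContinuousAt.continuousWithinAt
      apply (continuous_cos.abs.continuousAt).rpow_const
      left
      have : 0 < Real.cos x := Real.cos_pos_of_mem_Ioo ⟨by linarith [hx.1], hx.2⟩
      simp [abs_of_pos this]; exact this.ne'
    · rw [uIoc_of_le (by linarith : (0:ℝ) ≤ π/2)]
      refine Filter.eventually_of_mem (self_mem_ae_restrict measurableSet_Ioc) ?_
      intro θ hθ
      have h1 : 2/π * (π/2 - θ) ≤ Real.cos θ := by
        have := Real.mul_le_sin (x := π/2 - θ) (by linarith [hθ.2]) (by linarith [hθ.1])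
        rwa [Real.sin_pi_div_two_sub] at this
      rcases eq_or_lt_of_le hθ.2 with h2 | h2
      · have : Real.cos θ = 0 := by rw [h2]; exact Real.cos_pi_div_two
        simp only [hf, Real.norm_eq_abs, this, abs_zero]
        rw [Real.zero_rpow (by linarith : c ≠ 0), abs_zero]
        positivity
      · have hpos : 0 < 2/π * (π/2 - θ) := by
          apply mul_pos (by positivity); linarith
        have hcos : 0 < Real.cos θ := lt_of_lt_of_le hpos h1
        have key : |Real.cos θ| ^ c ≤ (2/π * (π/2 - θ)) ^ c := by
          rw [abs_of_pos hcos]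
          exact Real.rpow_le_rpow_of_nonpos hpos h1 h0.le
        have : (2/π * (π/2 - θ)) ^ c = (2/π) ^ c * (π/2 - θ) ^ c :=
          Real.mul_rpow (by positivity) (by linarith)
        simp only [hf, Real.norm_eq_abs]
        rw [abs_of_nonneg (Real.rpow_nonneg (abs_nonneg _) c)]
        calc |Real.cos θ| ^ c ≤ (2/π) ^ c * (π/2 - θ) ^ c := by rw [← this]; exact key
          _ ≤ |(2/π) ^ c * (π/2 - θ) ^ c| := le_abs_self _
  have feven : (fun x : ℝ => f (-x)) = f := by
    funext x; simp [hf]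
  have base2 : IntervalIntegrable f volume (-(π/2)) 0 := by
    have := (IntervalIntegrable.iff_comp_neg (by simp)).mp base
    rw [feven] at this
    simpa using this.symm
  have base3 : IntervalIntegrable f volume (-(π/2)) (π/2) := base2.trans base
  have hper := cos_per c
  have ext_pos : ∀ n : ℕ, IntervalIntegrable f volume (-(π/2)) (-(π/2) + n * π) := by
    intro n
    induction n with
    | zero => simpa using IntervalIntegrable.refl
    | succ n ih =>
      refine ih.trans ?_
      have h1 := base3.comp_sub_right ((n : ℝ) * π)
      have h2 : (fun x : ℝ => f (x - (n : ℝ) * π)) = f := funext fun x => hper.sub_nat_mul_eq n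
      rw [h2] at h1
      have e1 : π/2 + (n : ℝ) * π = -(π/2) + ((n : ℕ) + 1 : ℕ) * π := by push_cast; ring
      rw [e1] at h1
      convert h1 using 2 <;> push_cast <;> ring
  have ext_neg : ∀ n : ℕ, IntervalIntegrable f volume (-(π/2) - n * π) (-(π/2)) := by
    intro n
    induction n with
    | zero => simpa using IntervalIntegrable.refl
    | succ n ih =>
      have h1 := base3.comp_add_right (((n : ℝ) + 1) * π)
      have h2 : (fun x : ℝ => f (x + ((n : ℝ) + 1) * π)) = f := by
        funext x
        have := (hper.nat_mul (n + 1)) x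
        simpa [add_comm] using this
      rw [h2] at h1
      have e1 : π/2 - ((n : ℝ) + 1) * π = -(π/2) - (n : ℝ) * π := by ring
      rw [e1] at h1
      refine IntervalIntegrable.trans ?_ ih
      convert h1 using 2 <;> push_cast <;> ring
  obtain ⟨n₁, hn₁⟩ := exists_nat_gt ((max a b + π/2)/π)
  obtain ⟨n₂, hn₂⟩ := exists_nat_gt ((-(min a b) + π/2)/π)
  set n := n₁ + n₂ with hn
  have big := (ext_neg n).trans (ext_pos n)
  apply big.mono_set'
  have hn1 : (n₁ : ℝ) ≤ n := by simp [hn]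
  have hn2 : (n₂ : ℝ) ≤ n := by simp [hn]
  have hub : max a b ≤ -(π/2) + n * π := by
    rw [div_lt_iff₀ hπ] at hn₁
    nlinarith
  have hlb : -(π/2) - n * π ≤ min a b := by
    rw [div_lt_iff₀ hπ] at hn₂
    nlinarith
  rw [uIoc, uIoc]
  exact Ioc_subset_Ioc (le_trans inf_le_left hlb) (le_trans hub le_sup_right)

/-- odd power map -/
private lemma hmap_neg (r t : ℝ) : |(-t)| ^ (r - 1) * (-t) = -(|t| ^ (r - 1) * t) := by
  rw [abs_neg]; ring

private lemma hmap_strictMono {r : ℝ} (hr : 0 < r) :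
    StrictMono (fun t : ℝ => |t| ^ (r - 1) * t) := by
  have key : ∀ x y : ℝ, 0 ≤ x → x < y → |x| ^ (r - 1) * x < |y| ^ (r - 1) * y := by
    intro x y hx hxy
    have hy : 0 < y := lt_of_le_of_lt hx hxy
    rcases eq_or_lt_of_le hx with h0 | hxpos
    · rw [← h0, mul_zero, abs_of_pos hy]
      exact mul_pos (Real.rpow_pos_of_pos hy _) hy
    · rw [abs_of_pos hxpos, abs_of_pos hy, ← Real.rpow_add_one hxpos.ne',
        ← Real.rpow_add_one hy.ne', sub_add_cancel]
      exact Real.rpow_lt_rpow hxpos.le hxy hr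
  intro a b hab
  rcases le_or_gt 0 a with ha | ha
  · exact key a b ha hab
  · rcases le_or_gt b 0 with hb | hb
    · have : |(-b)| ^ (r - 1) * (-b) < |(-a)| ^ (r - 1) * (-a) := by
        apply key _ _ (neg_nonneg.2 hb); linarith
      rw [hmap_neg, hmap_neg] at this
      simpa using neg_lt_neg_iff.1 (by linarith)
    · calc |a| ^ (r - 1) * a < 0 := by
            have : (0:ℝ) < |(-a)| ^ (r - 1) * (-a) := by
              have := key 0 (-a) le_rfl (by linarith)
              simpa using this
            rw [hmap_neg] at this; linarith
        _ < |b| ^ (r - 1) * b := by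
            have := key 0 b le_rfl hb
            simpa using this

private lemma hmap_one (r : ℝ) : |(1:ℝ)| ^ (r - 1) * (1:ℝ) = 1 := by simp

theorem cnp_properties (p q : ℝ) (hp : 1 < p) (hq : q ∈ Set.Ico (0:ℝ) 1)
    (am : ℝ → ℝ) (ham : IsInverseOn (F1 p q) am Set.univ)
    (cn : ℝ → ℝ) (hcn : ∀ x, cn x = |Real.cos (am x)| ^ (2/p - 1) * Real.cos (am x)) :
    (∀ x : ℝ, cn (-x) = cn x) ∧
    (∀ x : ℝ, cn (x + 2 * K1 p q) = -cn x) ∧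
    StrictAntiOn cn (Set.Icc 0 (2 * K1 p q)) ∧
    cn 0 = 1 ∧ cn (2 * K1 p q) = -1 := by
  obtain ⟨hq0, hq1⟩ := hq
  have hπ := Real.pi_pos
  have hp0 : (0:ℝ) < p := by linarith
  have h2p : (0:ℝ) < 2/p := by positivity
  have hc : (-1:ℝ) < 1 - 2/p := by
    have : 2/p < 2 := by rw [div_lt_iff₀ hp0]; linarith
    linarith
  set I : ℝ → ℝ := fun θ => |Real.cos θ| ^ (1 - 2/p) / Real.sqrt (1 - q^2 * Real.sin θ ^ 2)
    with hIdef
  have hF1 : ∀ x, F1 p q x = ∫ θ in (0:ℝ)..x, I θ := fun x => rfl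
  have hden : ∀ θ : ℝ, 0 < 1 - q^2 * Real.sin θ ^ 2 := by
    intro θ
    nlinarith [Real.sin_sq_le_one θ, sq_nonneg (Real.sin θ), sq_nonneg q]
  have hInt : ∀ a b : ℝ, IntervalIntegrable I volume a b := by
    intro a b
    have h1 := coscpow_intervalIntegrable hc a b
    have hcont : Continuous fun θ : ℝ => (Real.sqrt (1 - q^2 * Real.sin θ ^ 2))⁻¹ := by
      apply Continuous.inv₀
      · exact (continuous_const.sub (continuous_const.mul (continuous_sin.pow 2))).sqrt
      · intro x; exact (Real.sqrt_pos.mpr (hden x)).ne'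
    have := h1.mul_continuousOn hcont.continuousOn
    simpa only [hIdef, div_eq_mul_inv] using this
  have hInonneg : ∀ θ, 0 ≤ I θ :=
    fun θ => div_nonneg (Real.rpow_nonneg (abs_nonneg _) _) (Real.sqrt_nonneg _)
  have hIeven : ∀ θ, I (-θ) = I θ := by
    intro θ; simp [hIdef, Real.cos_neg, Real.sin_neg, neg_sq]
  have hIper : Function.Periodic I π := by
    intro x; simp [hIdef, Real.cos_add_pi, Real.sin_add_pi, abs_neg, neg_sq]
  have hIrefl : ∀ θ, I (π - θ) = I θ := by
    intro θ; simp [hIdef, Real.cos_pi_sub, Real.sin_pi_sub, abs_neg]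
  have hF0 : F1 p q 0 = 0 := intervalIntegral.integral_same
  have hadd : ∀ a b : ℝ, F1 p q b = F1 p q a + ∫ θ in a..b, I θ := by
    intro a b
    rw [hF1, hF1, ← intervalIntegral.integral_add_adjacent_intervals (hInt 0 a) (hInt a b)]
  have hmono : Monotone (F1 p q) := by
    intro a b hab
    rw [hadd a b]
    have : 0 ≤ ∫ θ in a..b, I θ :=
      intervalIntegral.integral_nonneg hab fun u _ => hInonneg u
    linarith
  have hinj : Function.Injective (F1 p q) := by
    intro a b hab
    have h1 := ham.1 a (Set.mem_univ a)
    have h2 := ham.1 b (Set.mem_univ b)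
    rw [← h1, ← h2, hab]
  have hsm : StrictMono (F1 p q) := hmono.strictMono_of_injective hinj
  have hamsm : StrictMono am := by
    intro x y hxy
    have h1 : F1 p q (am x) < F1 p q (am y) := by
      rw [(ham.2 x).2, (ham.2 y).2]; exact hxy
    exact hsm.lt_iff_lt.mp h1
  have ham0 : am 0 = 0 := by
    have := ham.1 0 (Set.mem_univ 0)
    rwa [hF0] at this
  have hhalf : ∫ θ in (π/2)..π, I θ = K1 p q := by
    have h1 := intervalIntegral.integral_comp_sub_left (a := 0) (b := π/2) I π
    simp only [hIrefl, sub_zero] at h1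
    have e1 : π - π/2 = π/2 := by ring
    rw [e1] at h1
    rw [← h1, K1, hF1]
  have hFπ : F1 p q π = 2 * K1 p q := by
    have h1 := intervalIntegral.integral_add_adjacent_intervals (hInt 0 (π/2)) (hInt (π/2) π)
    rw [hhalf] at h1
    have h2 : (∫ θ in (0:ℝ)..(π/2), I θ) = K1 p q := (hF1 (π/2)).symm
    rw [h2] at h1
    rw [hF1, ← h1]; ring
  have hamK : am (2 * K1 p q) = π := by
    rw [← hFπ]; exact ham.1 π (Set.mem_univ π)
  have hFodd : ∀ x, F1 p q (-x) = - F1 p q x := by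
    intro x
    have h1 := intervalIntegral.integral_comp_neg (a := 0) (b := x) I
    simp only [hIeven, neg_zero] at h1
    rw [intervalIntegral.integral_symm 0 (-x)] at h1
    rw [hF1, hF1]
    linarith [h1]
  have hamodd : ∀ x, am (-x) = - am x := by
    intro x
    have h1 : F1 p q (-(am x)) = -x := by rw [hFodd, (ham.2 x).2]
    rw [← h1, ham.1 _ (Set.mem_univ _)]
  have hFper : ∀ x, F1 p q (x + π) = F1 p q x + 2 * K1 p q := by
    intro x
    have h1 := intervalIntegral.integral_add_adjacent_intervals (hInt 0 x) (hInt x (x + π))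
    have h2 := hIper.intervalIntegral_add_eq x 0
    rw [zero_add] at h2
    have h3 : (∫ θ in (0:ℝ)..π, I θ) = 2 * K1 p q := by rw [← hF1, hFπ]
    rw [h2, h3] at h1
    rw [hF1 (x + π), ← h1, hF1]
  have hamper : ∀ x, am (x + 2 * K1 p q) = am x + π := by
    intro x
    have h1 : F1 p q (am x + π) = x + 2 * K1 p q := by rw [hFper, (ham.2 x).2]
    rw [← h1, ham.1 _ (Set.mem_univ _)]
  have hm := hmap_strictMono h2p
  refine ⟨?_, ?_, ?_, ?_, ?_⟩
  · intro x
    rw [hcn, hcn, hamodd, Real.cos_neg]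
  · intro x
    rw [hcn, hcn, hamper, Real.cos_add_pi]
    exact hmap_neg _ _
  · intro x hx y hy hxy
    rw [hcn, hcn]
    apply hm
    have hax : am x ∈ Set.Icc 0 π := by
      constructor
      · rw [← ham0]; exact hamsm.monotone hx.1
      · rw [← hamK]; exact hamsm.monotone hx.2
    have hay : am y ∈ Set.Icc 0 π := by
      constructor
      · rw [← ham0]; exact hamsm.monotone hy.1
      · rw [← hamK]; exact hamsm.monotone hy.2
    exact Real.strictAntiOn_cos hax hay (hamsm hxy)
  · rw [hcn, ham0, Real.cos_zero, hmap_one]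
  · rw [hcn, hamK, Real.cos_pi]
    rw [show |(-1:ℝ)| ^ (2/p - 1) * (-1:ℝ) = -(|(1:ℝ)| ^ (2/p - 1) * 1) from hmap_neg _ 1,
      hmap_one]
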